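/- For every nonnegative integer m and real number a, the double sum ∑_{j,k} C(2m+1, 2j) · C(m-j, k) · C(2k+2j, k+j) · (a+1)^j (a-1)^k / 2^{3(k+j)} equals the single sum 2^{-2m} ∑_k 2^k · C(2m-2k, m-k) · C(m+k, k) · (a+1)^k. -/

import Mathlib

open Finset


-- pairing lemma
lemma pair_sum {M : Type*} [AddCommMonoid M] (f : ℕ → M) (n : ℕ) :
    ∑ k ∈ range (2 * (n + 1)), f k = ∑ j ∈ range (n + 1), (f (2 * j) + f (2 * j + 1)) := by
  induction n with
  | zero => simp [Finset.sum_range_succ]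
  | succ n ih =>
      have h2 : 2 * (n + 2) = (2 * (n + 1)) + 1 + 1 := by ring
      rw [h2, Finset.sum_range_succ, Finset.sum_range_succ, ih,
        Finset.sum_range_succ _ (n + 1), add_assoc]

lemma sum_even_choose (n : ℕ) : ∑ j ∈ range (n + 1), (2 * n + 1).choose (2 * j) = 4 ^ n := by
  have hEO : ∑ j ∈ range (n + 1), (2 * n + 1).choose (2 * j)
      = ∑ j ∈ range (n + 1), (2 * n + 1).choose (2 * j + 1) := by
    rw [← Finset.sum_range_reflect]
    refine Finset.sum_congr rfl fun j hj => ?_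
    have hj' : j ≤ n := by simpa using Nat.lt_succ_iff.mp (Finset.mem_range.mp hj)
    have h1 : 2 * (n + 1 - 1 - j) = (2 * n + 1) - (2 * j + 1) := by omega
    rw [h1, Nat.choose_symm (by omega)]
  have hsum : ∑ k ∈ range (2 * (n + 1)), (2 * n + 1).choose k = 2 ^ (2 * n + 1) := by
    have := Nat.sum_range_choose (2 * n + 1)
    have h : 2 * (n + 1) = 2 * n + 1 + 1 := by ring
    rw [h]; exact this
  rw [pair_sum] at hsum
  rw [Finset.sum_add_distrib, ← hEO] at hsum
  have : 2 * ∑ j ∈ range (n + 1), (2 * n + 1).choose (2 * j) = 2 * 4 ^ n := by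
    rw [two_mul]
    rw [hsum]
    rw [pow_succ, pow_mul]; ring
  omega

lemma sum_odd_choose (n : ℕ) : ∑ j ∈ range (n + 1), (2 * n + 1).choose (2 * j + 1) = 4 ^ n := by
  have hEO : ∑ j ∈ range (n + 1), (2 * n + 1).choose (2 * j)
      = ∑ j ∈ range (n + 1), (2 * n + 1).choose (2 * j + 1) := by
    rw [← Finset.sum_range_reflect]
    refine Finset.sum_congr rfl fun j hj => ?_
    have hj' : j ≤ n := by simpa using Nat.lt_succ_iff.mp (Finset.mem_range.mp hj)
    have h1 : 2 * (n + 1 - 1 - j) = (2 * n + 1) - (2 * j + 1) := by omega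
    rw [h1, Nat.choose_symm (by omega)]
  rw [← hEO, sum_even_choose]


def gsym (M l : ℕ) : ℕ := ∑ j ∈ range (l + 1), (2 * M + 1).choose (2 * j) * (M - j).choose (M - l)
def hsym (M l : ℕ) : ℕ := ∑ j ∈ range (l + 1), (2 * M + 1).choose (2 * j + 1) * (M - j).choose (M - l)

lemma pascal2 (n k : ℕ) :
    (n + 2).choose (k + 2) = n.choose k + 2 * n.choose (k + 1) + n.choose (k + 2) := by
  rw [Nat.choose_succ_succ (n + 1) (k + 1), Nat.choose_succ_succ n k, Nat.choose_succ_succ n (k + 1)]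
  ring

lemma gsym_peel (N t : ℕ) :
    gsym N (t + 1)
      = (∑ j ∈ range (t + 1), (2 * N + 1).choose (2 * j + 2) * (N - 1 - j).choose (N - (t + 1)))
        + N.choose (N - (t + 1)) := by
  rw [gsym, Finset.sum_range_succ']
  simp only [Nat.mul_zero, Nat.choose_zero_right, Nat.sub_zero, one_mul]
  congr 1
  refine Finset.sum_congr rfl fun j hj => ?_
  congr 2 <;> omega

lemma hsym_peel (N t : ℕ) :
    hsym N (t + 1)
      = (∑ j ∈ range (t + 1), (2 * N + 1).choose (2 * j + 3) * (N - 1 - j).choose (N - (t + 1)))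
        + (2 * N + 1) * N.choose (N - (t + 1)) := by
  rw [hsym, Finset.sum_range_succ']
  simp only [Nat.mul_zero, Nat.choose_one_right, Nat.sub_zero, zero_add]
  congr 1
  refine Finset.sum_congr rfl fun j hj => ?_
  congr 2 <;> omega

lemma gsym_peel' (N t : ℕ) (h : t + 1 ≤ N) :
    gsym N t
      = (∑ j ∈ range (t + 1), (2 * N + 1).choose (2 * j + 2) * (N - 1 - j).choose (N - t))
        + N.choose (N - t) := by
  cases t with
  | zero =>
      simp [gsym]
      exact Or.inr (Nat.choose_eq_zero_of_lt (by omega))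
  | succ s =>
      rw [gsym_peel N s]
      conv_rhs => rw [Finset.sum_range_succ]
      rw [Nat.choose_eq_zero_of_lt (show N - 1 - (s + 1) < N - (s + 1) by omega)]
      simp

lemma hsym_peel' (N t : ℕ) (h : t + 1 ≤ N) :
    hsym N t
      = (∑ j ∈ range (t + 1), (2 * N + 1).choose (2 * j + 3) * (N - 1 - j).choose (N - t))
        + (2 * N + 1) * N.choose (N - t) := by
  cases t with
  | zero =>
      simp [hsym]
      exact Or.inr (Nat.choose_eq_zero_of_lt (by omega))
  | succ s =>
      rw [hsym_peel N s]
      conv_rhs => rw [Finset.sum_range_succ]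
      rw [Nat.choose_eq_zero_of_lt (show N - 1 - (s + 1) < N - (s + 1) by omega)]
      simp

lemma shiftG (N t : ℕ) (h : t + 1 ≤ N) :
    gsym N (t + 1) + gsym N t
      = (∑ j ∈ range (t + 1), (2 * N + 1).choose (2 * j + 2) * (N - j).choose (N - t))
        + (N + 1).choose (N - t) := by
  rw [gsym_peel N t, gsym_peel' N t h]
  have hsum : ∑ j ∈ range (t + 1), (2 * N + 1).choose (2 * j + 2) * (N - j).choose (N - t)
      = (∑ j ∈ range (t + 1), (2 * N + 1).choose (2 * j + 2) * (N - 1 - j).choose (N - (t + 1)))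
        + ∑ j ∈ range (t + 1), (2 * N + 1).choose (2 * j + 2) * (N - 1 - j).choose (N - t) := by
    rw [← Finset.sum_add_distrib]
    refine Finset.sum_congr rfl fun j hj => ?_
    have hj' : j ≤ t := Nat.lt_succ_iff.mp (Finset.mem_range.mp hj)
    rw [← Nat.mul_add]
    congr 1
    have e1 : N - j = (N - 1 - j) + 1 := by omega
    have e2 : N - t = (N - (t + 1)) + 1 := by omega
    rw [e1, e2]
    exact Nat.choose_succ_succ _ _
  have hb : (N + 1).choose (N - t) = N.choose (N - (t + 1)) + N.choose (N - t) := by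
    have e2 : N - t = (N - (t + 1)) + 1 := by omega
    rw [e2]
    exact Nat.choose_succ_succ _ _
  rw [hsum, hb]
  ring

lemma shiftH (N t : ℕ) (h : t + 1 ≤ N) :
    hsym N (t + 1) + hsym N t
      = (∑ j ∈ range (t + 1), (2 * N + 1).choose (2 * j + 3) * (N - j).choose (N - t))
        + (2 * N + 1) * (N + 1).choose (N - t) := by
  rw [hsym_peel N t, hsym_peel' N t h]
  have hsum : ∑ j ∈ range (t + 1), (2 * N + 1).choose (2 * j + 3) * (N - j).choose (N - t)
      = (∑ j ∈ range (t + 1), (2 * N + 1).choose (2 * j + 3) * (N - 1 - j).choose (N - (t + 1)))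
        + ∑ j ∈ range (t + 1), (2 * N + 1).choose (2 * j + 3) * (N - 1 - j).choose (N - t) := by
    rw [← Finset.sum_add_distrib]
    refine Finset.sum_congr rfl fun j hj => ?_
    have hj' : j ≤ t := Nat.lt_succ_iff.mp (Finset.mem_range.mp hj)
    rw [← Nat.mul_add]
    congr 1
    have e1 : N - j = (N - 1 - j) + 1 := by omega
    have e2 : N - t = (N - (t + 1)) + 1 := by omega
    rw [e1, e2]
    exact Nat.choose_succ_succ _ _
  have hb : (2 * N + 1) * (N + 1).choose (N - t)
      = (2 * N + 1) * N.choose (N - (t + 1)) + (2 * N + 1) * N.choose (N - t) := by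
    have e2 : N - t = (N - (t + 1)) + 1 := by omega
    rw [e2, Nat.choose_succ_succ]
    ring
  rw [hsum, hb]
  ring

lemma grec (N t : ℕ) (h : t + 1 ≤ N) :
    gsym (N + 1) (t + 1) = gsym N (t + 1) + 2 * gsym N t + 2 * hsym N t := by
  have h1 : gsym (N + 1) (t + 1)
      = (∑ j ∈ range (t + 1),
          ((2 * N + 1).choose (2 * j) + 2 * (2 * N + 1).choose (2 * j + 1)
            + (2 * N + 1).choose (2 * j + 2)) * (N - j).choose (N - t))
        + (N + 1).choose (N - t) := by
    rw [gsym_peel (N + 1) t]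
    congr 1
    · refine Finset.sum_congr rfl fun j hj => ?_
      have e1 : 2 * (N + 1) + 1 = (2 * N + 1) + 2 := by ring
      have e2 : N + 1 - 1 - j = N - j := by omega
      have e3 : N + 1 - (t + 1) = N - t := by omega
      rw [e1, e2, e3, pascal2]
    · congr 1
      omega
  have h2 : ∑ j ∈ range (t + 1),
        ((2 * N + 1).choose (2 * j) + 2 * (2 * N + 1).choose (2 * j + 1)
          + (2 * N + 1).choose (2 * j + 2)) * (N - j).choose (N - t)
      = gsym N t + 2 * hsym N t
        + ∑ j ∈ range (t + 1), (2 * N + 1).choose (2 * j + 2) * (N - j).choose (N - t) := by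
    rw [gsym, hsym, Finset.mul_sum, ← Finset.sum_add_distrib, ← Finset.sum_add_distrib]
    refine Finset.sum_congr rfl fun j hj => ?_
    ring
  have h3 := shiftG N t h
  omega

lemma hrec (N t : ℕ) (h : t + 1 ≤ N) :
    hsym (N + 1) (t + 1)
      = hsym N (t + 1) + 2 * hsym N t + 2 * gsym N (t + 1) + 2 * gsym N t := by
  have h1 : hsym (N + 1) (t + 1)
      = (∑ j ∈ range (t + 1),
          ((2 * N + 1).choose (2 * j + 1) + 2 * (2 * N + 1).choose (2 * j + 2)
            + (2 * N + 1).choose (2 * j + 3)) * (N - j).choose (N - t))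
        + (2 * N + 3) * (N + 1).choose (N - t) := by
    rw [hsym_peel (N + 1) t]
    congr 1
    · refine Finset.sum_congr rfl fun j hj => ?_
      have e1 : 2 * (N + 1) + 1 = (2 * N + 1) + 2 := by ring
      have e2 : N + 1 - 1 - j = N - j := by omega
      have e3 : N + 1 - (t + 1) = N - t := by omega
      have e4 : 2 * j + 3 = (2 * j + 1) + 2 := by omega
      rw [e1, e2, e3, e4, pascal2]
    · have e1 : 2 * (N + 1) + 1 = 2 * N + 3 := by ring
      have e3 : N + 1 - (t + 1) = N - t := by omega
      rw [e1, e3]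
  have h2 : ∑ j ∈ range (t + 1),
        ((2 * N + 1).choose (2 * j + 1) + 2 * (2 * N + 1).choose (2 * j + 2)
          + (2 * N + 1).choose (2 * j + 3)) * (N - j).choose (N - t)
      = hsym N t
        + 2 * ∑ j ∈ range (t + 1), (2 * N + 1).choose (2 * j + 2) * (N - j).choose (N - t)
        + ∑ j ∈ range (t + 1), (2 * N + 1).choose (2 * j + 3) * (N - j).choose (N - t) := by
    rw [hsym, Finset.mul_sum, ← Finset.sum_add_distrib, ← Finset.sum_add_distrib]
    refine Finset.sum_congr rfl fun j hj => ?_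
    ring
  have h3 := shiftG N t h
  have h4 := shiftH N t h
  have h5 : (2 * N + 3) * (N + 1).choose (N - t)
      = (2 * N + 1) * (N + 1).choose (N - t) + 2 * (N + 1).choose (N - t) := by ring
  set X := (N + 1).choose (N - t) with hX
  set P := (2 * N + 1) * X with hP
  omega

lemma gclosed_step (n k x : ℕ) :
    (4 * x) * (n + 1).choose (k + 2) + 2 * (x * n.choose k)
      + 2 * (x * (n.choose (k + 1) + (n + 1).choose (k + 1)))
    = (4 * x) * (n + 2).choose (k + 2) := by
  have e0 : (n + 2).choose (k + 2) = (n + 1).choose (k + 1) + (n + 1).choose (k + 2) :=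
    Nat.choose_succ_succ (n + 1) (k + 1)
  rw [e0, Nat.choose_succ_succ n k]
  have : (n + 1).choose (k + 2) = n.choose (k + 1) + n.choose (k + 2) :=
    Nat.choose_succ_succ n (k + 1)
  rw [this]
  ring

lemma hclosed_step (n k x : ℕ) :
    (4 * x) * ((n + 1).choose (k + 3) + (n + 2).choose (k + 3))
      + 2 * (x * (n.choose (k + 1) + (n + 1).choose (k + 1)))
      + 2 * ((4 * x) * (n + 1).choose (k + 2)) + 2 * (x * n.choose k)
    = (4 * x) * ((n + 2).choose (k + 3) + (n + 3).choose (k + 3)) := by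
  have e1 : (n + 3).choose (k + 3) = (n + 2).choose (k + 2) + (n + 2).choose (k + 3) :=
    Nat.choose_succ_succ (n + 2) (k + 2)
  have e2 : (n + 2).choose (k + 3) = (n + 1).choose (k + 2) + (n + 1).choose (k + 3) :=
    Nat.choose_succ_succ (n + 1) (k + 2)
  have e3 : (n + 2).choose (k + 2) = (n + 1).choose (k + 1) + (n + 1).choose (k + 2) :=
    Nat.choose_succ_succ (n + 1) (k + 1)
  have e4 : (n + 1).choose (k + 3) = n.choose (k + 2) + n.choose (k + 3) :=
    Nat.choose_succ_succ n (k + 2)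
  have e5 : (n + 1).choose (k + 2) = n.choose (k + 1) + n.choose (k + 2) :=
    Nat.choose_succ_succ n (k + 1)
  have e6 : (n + 1).choose (k + 1) = n.choose k + n.choose (k + 1) :=
    Nat.choose_succ_succ n k
  rw [e1, e2, e3, e4, e5, e6]
  ring

theorem GH_closed (M : ℕ) : ∀ l ≤ M,
    gsym M l = 4 ^ l * (M + l).choose (2 * l)
    ∧ hsym M l = 4 ^ l * ((M + l).choose (2 * l + 1) + (M + l + 1).choose (2 * l + 1)) := by
  induction M with
  | zero =>
      intro l hl
      interval_cases l
      constructor <;> simp [gsym, hsym]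
  | succ N ih =>
      intro l hl
      rcases Nat.lt_or_ge l (N + 1) with hlt | hge
      · -- l ≤ N
        have hlN : l ≤ N := by omega
        cases l with
        | zero =>
            refine ⟨by simp [gsym], by simp [hsym, Nat.choose_one_right]; omega⟩
        | succ t =>
            have ht : t + 1 ≤ N := hlN
            obtain ⟨ig1, ih1⟩ := ih (t + 1) ht
            obtain ⟨ig0, ih0⟩ := ih t (by omega)
            constructor
            · rw [grec N t ht, ig1, ig0, ih0]
              simp only [show (4:ℕ) ^ (t + 1) = 4 * 4 ^ t from by rw [pow_succ]; ring,
                show N + (t + 1) = N + t + 1 from by omega,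
                show 2 * (t + 1) = 2 * t + 2 from by omega,
                show N + 1 + (t + 1) = N + t + 2 from by omega,
                show N + t + 1 + 1 = N + t + 2 from by omega]
              exact gclosed_step (N + t) (2 * t) (4 ^ t)
            · rw [hrec N t ht, ih1, ih0, ig1, ig0]
              simp only [show (4:ℕ) ^ (t + 1) = 4 * 4 ^ t from by rw [pow_succ]; ring,
                show N + (t + 1) = N + t + 1 from by omega,
                show 2 * (t + 1) + 1 = 2 * t + 3 from by omega,
                show 2 * (t + 1) = 2 * t + 2 from by omega,
                show N + 1 + (t + 1) = N + t + 2 from by omega,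
                show N + t + 1 + 1 = N + t + 2 from by omega,
                show N + t + 2 + 1 = N + t + 3 from by omega]
              exact hclosed_step (N + t) (2 * t) (4 ^ t)
      · -- l = N + 1
        have hl' : l = N + 1 := by omega
        subst hl'
        have hz : (N + 1) - (N + 1) = 0 := by omega
        constructor
        · have : gsym (N + 1) (N + 1)
              = ∑ j ∈ range (N + 1 + 1), (2 * (N + 1) + 1).choose (2 * j) := by
            rw [gsym]
            refine Finset.sum_congr rfl fun j hj => ?_
            rw [hz, Nat.choose_zero_right, Nat.mul_one]
          rw [this, sum_even_choose (N + 1)]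
          rw [show N + 1 + (N + 1) = 2 * (N + 1) from by omega, Nat.choose_self, Nat.mul_one]
        · have : hsym (N + 1) (N + 1)
              = ∑ j ∈ range (N + 1 + 1), (2 * (N + 1) + 1).choose (2 * j + 1) := by
            rw [hsym]
            refine Finset.sum_congr rfl fun j hj => ?_
            rw [hz, Nat.choose_zero_right, Nat.mul_one]
          rw [this, sum_odd_choose (N + 1)]
          rw [show N + 1 + (N + 1) = 2 * (N + 1) from by omega, Nat.choose_self,
            Nat.choose_eq_zero_of_lt (by omega)]
          simp

noncomputable def phi (N p : ℕ) : ℝ :=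
  (Nat.centralBinom p : ℝ) * (Nat.centralBinom N : ℝ) / (4 ^ N * ((N + p).choose p : ℝ))

lemma binom_succ_sum (N : ℕ) (a : ℕ → ℝ) :
    ∑ i ∈ range (N + 2), ((N + 1).choose i : ℝ) * a i
      = ∑ i ∈ range (N + 1), (N.choose i : ℝ) * a i
        + ∑ i ∈ range (N + 1), (N.choose i : ℝ) * a (i + 1) := by
  rw [Finset.sum_range_succ' (fun i => ((N + 1).choose i : ℝ) * a i) (N + 1)]
  have h1 : ∀ i ∈ range (N + 1), ((N + 1).choose (i + 1) : ℝ) * a (i + 1)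
      = (N.choose i : ℝ) * a (i + 1) + (N.choose (i + 1) : ℝ) * a (i + 1) := by
    intro i _
    have h : ((N + 1).choose (i + 1) : ℝ) = (N.choose i : ℝ) + (N.choose (i + 1) : ℝ) := by
      exact_mod_cast congrArg (Nat.cast (R := ℝ)) (Nat.choose_succ_succ N i)
    rw [h]; ring
  rw [Finset.sum_congr rfl h1, Finset.sum_add_distrib]
  have h3 : ∑ i ∈ range (N + 2), (N.choose i : ℝ) * a i
      = ∑ i ∈ range (N + 1), (N.choose (i + 1) : ℝ) * a (i + 1)
        + (N.choose 0 : ℝ) * a 0 :=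
    Finset.sum_range_succ' (fun i => (N.choose i : ℝ) * a i) (N + 1)
  rw [Finset.sum_range_succ] at h3
  rw [Nat.choose_eq_zero_of_lt (by omega : N < N + 1)] at h3
  simp only [Nat.choose_zero_right, Nat.cast_one, Nat.cast_zero, one_mul, zero_mul, add_zero] at h3 ⊢
  linarith

lemma phi_rec (N p : ℕ) : phi N p + (-1 / 4) * phi N (p + 1) = phi (N + 1) p := by
  have hNp : (0 : ℝ) < ((N + p).choose p : ℝ) := by
    exact_mod_cast Nat.choose_pos (by omega)
  have hcbN : (0 : ℝ) < (N.centralBinom : ℝ) := by exact_mod_cast N.centralBinom_pos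
  have hcbp : (0 : ℝ) < (p.centralBinom : ℝ) := by exact_mod_cast p.centralBinom_pos
  -- choose identities
  have hc2 : ((N + (p + 1)).choose (p + 1) : ℝ) * (p + 1)
      = (N + p + 1) * ((N + p).choose p : ℝ) := by
    have h := Nat.add_one_mul_choose_eq (N + p) p
    rw [show N + (p + 1) = (N + p) + 1 from by omega]
    exact_mod_cast congrArg (Nat.cast (R := ℝ)) h.symm
  have hc1 : ((N + 1 + p).choose p : ℝ) * (N + 1)
      = (N + p + 1) * ((N + p).choose p : ℝ) := by
    have h := Nat.add_one_mul_choose_eq (N + p) N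
    have e1 : (N + p).choose N = (N + p).choose p := by
      rw [show N + p = p + N from by omega]
      exact Nat.choose_symm_add.symm
    have e2 : ((N + p) + 1).choose (N + 1) = (N + 1 + p).choose p := by
      rw [show (N + p) + 1 = (N + 1) + p from by omega]
      exact Nat.choose_symm_add
    rw [e1, e2] at h
    exact_mod_cast congrArg (Nat.cast (R := ℝ)) h.symm
  have hcb1 : ((N + 1).centralBinom : ℝ) * (N + 1)
      = 2 * (2 * N + 1) * (N.centralBinom : ℝ) := by
    have h := Nat.succ_mul_centralBinom_succ N
    exact_mod_cast congrArg (Nat.cast (R := ℝ)) (by rw [← h]; ring)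
  have hcbp1 : ((p + 1).centralBinom : ℝ) * (p + 1)
      = 2 * (2 * p + 1) * (p.centralBinom : ℝ) := by
    have h := Nat.succ_mul_centralBinom_succ p
    exact_mod_cast congrArg (Nat.cast (R := ℝ)) (by rw [← h]; ring)
  have hch1 : ((N + 1 + p).choose p : ℝ) = (N + p + 1) * ((N + p).choose p : ℝ) / (N + 1) := by
    field_simp at hc1 ⊢
    linarith [hc1]
  have hch2 : ((N + (p + 1)).choose (p + 1) : ℝ)
      = (N + p + 1) * ((N + p).choose p : ℝ) / (p + 1) := by
    field_simp at hc2 ⊢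
    linarith [hc2]
  have hcbb1 : ((N + 1).centralBinom : ℝ) = 2 * (2 * N + 1) * (N.centralBinom : ℝ) / (N + 1) := by
    field_simp at hcb1 ⊢
    linarith [hcb1]
  have hcbb2 : ((p + 1).centralBinom : ℝ) = 2 * (2 * p + 1) * (p.centralBinom : ℝ) / (p + 1) := by
    field_simp at hcbp1 ⊢
    linarith [hcbp1]
  rw [phi, phi, phi, hch1, hch2, hcbb1, hcbb2]
  have h4 : (4 : ℝ) ^ (N + 1) = 4 * 4 ^ N := by rw [pow_succ]; ring
  rw [h4]
  have hNne : ((N : ℝ) + 1) ≠ 0 := by positivity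
  have hpne : ((p : ℝ) + 1) ≠ 0 := by positivity
  have h4ne : ((4 : ℝ) ^ N) ≠ 0 := by positivity
  have hNpne : ((N + p).choose p : ℝ) ≠ 0 := ne_of_gt hNp
  have hNp1ne : ((N : ℝ) + p + 1) ≠ 0 := by positivity
  field_simp
  ring

lemma F1 (N : ℕ) : ∀ p : ℕ,
    ∑ i ∈ range (N + 1), (N.choose i : ℝ) * (((i + p).centralBinom : ℝ) * (-1 / 4) ^ i)
      = phi N p := by
  induction N with
  | zero =>
      intro p
      simp [phi, Nat.centralBinom_zero]
  | succ N ih =>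
      intro p
      have hb := binom_succ_sum N (fun i => ((i + p).centralBinom : ℝ) * (-1 / 4) ^ i)
      rw [show N + 1 + 1 = N + 2 from rfl, hb]
      have h2 : ∑ i ∈ range (N + 1),
            (N.choose i : ℝ) * (((i + 1 + p).centralBinom : ℝ) * (-1 / 4) ^ (i + 1))
          = (-1 / 4) * ∑ i ∈ range (N + 1),
              (N.choose i : ℝ) * (((i + (p + 1)).centralBinom : ℝ) * (-1 / 4) ^ i) := by
        rw [Finset.mul_sum]
        refine Finset.sum_congr rfl fun i _ => ?_
        rw [show i + 1 + p = i + (p + 1) from by omega, pow_succ]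
        ring
      rw [h2, ih p, ih (p + 1)]
      exact phi_rec N p

lemma bm_inner_sum (M p : ℕ) (u : ℝ) :
    ∑ k ∈ range (M + 1),
        (M.choose k : ℝ) * ((k + p).centralBinom : ℝ) * (u - 2) ^ k / 8 ^ k
      = ∑ s ∈ range (M + 1), (M.choose s : ℝ) * phi (M - s) (s + p) * u ^ s / 8 ^ s := by
  have hstep1 : ∀ k ∈ range (M + 1),
      (M.choose k : ℝ) * ((k + p).centralBinom : ℝ) * (u - 2) ^ k / 8 ^ k
        = ∑ s ∈ range (M + 1),
            (M.choose k : ℝ) * ((k + p).centralBinom : ℝ)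
              * (u ^ s * (-2 : ℝ) ^ (k - s) * (k.choose s : ℝ)) / 8 ^ k := by
    intro k hk
    have hexp : (u - 2) ^ k
        = ∑ s ∈ range (k + 1), u ^ s * (-2 : ℝ) ^ (k - s) * (k.choose s : ℝ) := by
      rw [show u - 2 = u + (-2) by ring]
      exact add_pow u (-2) k
    rw [hexp, Finset.mul_sum, Finset.sum_div]
    refine Finset.sum_subset ?_ ?_
    · intro s hs
      simp only [Finset.mem_range] at hs ⊢
      have := Finset.mem_range.mp hk
      omega
    · intro s hs hs'
      simp only [Finset.mem_range] at hs hs'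
      rw [Nat.choose_eq_zero_of_lt (show k < s by omega)]
      simp
  rw [Finset.sum_congr rfl hstep1, Finset.sum_comm]
  refine Finset.sum_congr rfl fun s hs => ?_
  have hsM : s ≤ M := by simpa [Nat.lt_succ_iff] using Finset.mem_range.mp hs
  have hdrop : ∑ k ∈ range (M + 1),
      (M.choose k : ℝ) * ((k + p).centralBinom : ℝ)
        * (u ^ s * (-2 : ℝ) ^ (k - s) * (k.choose s : ℝ)) / 8 ^ k
      = ∑ k ∈ Finset.Ico s (M + 1),
          (M.choose k : ℝ) * ((k + p).centralBinom : ℝ)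
            * (u ^ s * (-2 : ℝ) ^ (k - s) * (k.choose s : ℝ)) / 8 ^ k := by
    symm
    refine Finset.sum_subset ?_ ?_
    · intro k hk
      simp only [Finset.mem_Ico] at hk
      exact Finset.mem_range.mpr hk.2
    · intro k hk hk'
      simp only [Finset.mem_range] at hk
      simp only [Finset.mem_Ico, not_and, not_le] at hk'
      rw [Nat.choose_eq_zero_of_lt (show k < s by omega)]
      simp
  rw [hdrop, Finset.sum_Ico_eq_sum_range]
  rw [show M + 1 - s = (M - s) + 1 from by omega]
  have hpt : ∀ i ∈ range ((M - s) + 1),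
      (M.choose (s + i) : ℝ) * (((s + i) + p).centralBinom : ℝ)
        * (u ^ s * (-2 : ℝ) ^ ((s + i) - s) * ((s + i).choose s : ℝ)) / 8 ^ (s + i)
      = (M.choose s : ℝ) * u ^ s / 8 ^ s
          * (((M - s).choose i : ℝ) * (((i + (s + p)).centralBinom : ℝ) * (-1 / 4 : ℝ) ^ i)) := by
    intro i hi
    have hiM : i ≤ M - s := by simpa [Nat.lt_succ_iff] using Finset.mem_range.mp hi
    have hcm : (M.choose (s + i) : ℝ) * ((s + i).choose s : ℝ)
        = (M.choose s : ℝ) * ((M - s).choose i : ℝ) := by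
      have h := Nat.choose_mul (n := M) (show s ≤ s + i by omega)
      have h2 : M.choose (s + i) * (s + i).choose s = M.choose s * (M - s).choose i := by
        rw [h]
        congr 1
        congr 1
        omega
      exact_mod_cast congrArg (Nat.cast (R := ℝ)) h2
    rw [show (s + i) - s = i from by omega, show (s + i) + p = i + (s + p) from by omega,
      show (8 : ℝ) ^ (s + i) = 8 ^ s * 8 ^ i from by rw [pow_add],
      show ((-1 : ℝ) / 4) ^ i = (-2 : ℝ) ^ i / 8 ^ i from by
        rw [show (-1 : ℝ) / 4 = (-2) / 8 by norm_num, div_pow]]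
    have h8s : (8 : ℝ) ^ s ≠ 0 := by positivity
    have h8i : (8 : ℝ) ^ i ≠ 0 := by positivity
    field_simp
    linear_combination (norm := ring_nf) (u ^ s * ((i + (s + p)).centralBinom : ℝ)) * hcm
  rw [Finset.sum_congr rfl hpt, ← Finset.mul_sum, F1 (M - s) (s + p)]
  ring

lemma tri_swap (n : ℕ) (f : ℕ → ℕ → ℝ) :
    ∑ j ∈ range (n + 1), ∑ s ∈ range (n + 1 - j), f j s
      = ∑ l ∈ range (n + 1), ∑ j ∈ range (l + 1), f j (l - j) := by
  rw [Finset.sum_sigma', Finset.sum_sigma']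
  refine Finset.sum_nbij' (fun x => ⟨x.1 + x.2, x.1⟩) (fun y => ⟨y.2, y.1 - y.2⟩)
    ?_ ?_ ?_ ?_ ?_
  · rintro ⟨j, s⟩ h
    simp only [Finset.mem_sigma, Finset.mem_range] at h ⊢
    omega
  · rintro ⟨l, j⟩ h
    simp only [Finset.mem_sigma, Finset.mem_range] at h ⊢
    omega
  · rintro ⟨j, s⟩ h
    simp only [Finset.mem_sigma, Finset.mem_range] at h
    have e : (j + s) - j = s := by omega
    simp [e]
  · rintro ⟨l, j⟩ h
    simp only [Finset.mem_sigma, Finset.mem_range] at h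
    have e : j + (l - j) = l := by omega
    simp [e]
  · rintro ⟨j, s⟩ h
    simp only [Finset.mem_sigma, Finset.mem_range] at h
    have e : (j + s) - j = s := by omega
    simp [e]

lemma final_coeff (m l : ℕ) (h : l ≤ m) (u : ℝ) :
    ((4 ^ l * (m + l).choose (2 * l) : ℕ) : ℝ) * (phi (m - l) l * u ^ l / 8 ^ l)
      = ((2 : ℝ) ^ (2 * m))⁻¹
          * (2 ^ l * (((m - l).centralBinom : ℕ) : ℝ) * ((m + l).choose l : ℝ) * u ^ l) := by
  rw [phi, show (m - l) + l = m from by omega]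
  have h1 : ((m + l).choose (2 * l) : ℝ) * (l.centralBinom : ℝ)
      = ((m + l).choose l : ℝ) * (m.choose l : ℝ) := by
    have h2 := Nat.choose_mul (n := m + l) (show l ≤ 2 * l by omega)
    have h3 : (m + l).choose (2 * l) * l.centralBinom = (m + l).choose l * m.choose l := by
      rw [Nat.centralBinom_eq_two_mul_choose, h2, show m + l - l = m from by omega,
        show 2 * l - l = l from by omega]
    exact_mod_cast congrArg (Nat.cast (R := ℝ)) h3
  have h2 : (4 : ℝ) ^ l * 2 ^ (2 * m) = 2 ^ l * (4 ^ (m - l) * 8 ^ l) := by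
    rw [show (4 : ℝ) = 2 ^ 2 by norm_num, show (8 : ℝ) = 2 ^ 3 by norm_num,
      ← pow_mul, ← pow_mul, ← pow_mul, ← pow_add, ← pow_add, ← pow_add]
    congr 1
    omega
  have hml : (0 : ℝ) < (m.choose l : ℝ) := by exact_mod_cast Nat.choose_pos h
  have h2m : ((2 : ℝ) ^ (2 * m)) ≠ 0 := by positivity
  have h4ml : ((4 : ℝ) ^ (m - l)) ≠ 0 := by positivity
  have h8l : ((8 : ℝ) ^ l) ≠ 0 := by positivity
  push_cast
  field_simp
  linear_combination ((((m - l).centralBinom : ℕ) : ℝ) * u ^ l * 2 ^ (2 * m) * 4 ^ l) * h1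
    + (((m + l).choose l : ℝ) * (m.choose l : ℝ) * (((m - l).centralBinom : ℕ) : ℝ) * u ^ l) * h2

lemma Gval (m l : ℕ) (h : l ≤ m) :
    ∑ j ∈ range (l + 1), (2 * m + 1).choose (2 * j) * (m - j).choose (l - j)
      = 4 ^ l * (m + l).choose (2 * l) := by
  have hc : ∀ j ∈ range (l + 1),
      (2 * m + 1).choose (2 * j) * (m - j).choose (l - j)
        = (2 * m + 1).choose (2 * j) * (m - j).choose (m - l) := by
    intro j hj
    have hjl : j ≤ l := by simpa [Nat.lt_succ_iff] using Finset.mem_range.mp hj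
    congr 1
    rw [← Nat.choose_symm (show l - j ≤ m - j by omega),
      show (m - j) - (l - j) = m - l from by omega]
  rw [Finset.sum_congr rfl hc]
  have hg := (GH_closed m l h).1
  rw [gsym] at hg
  exact hg

/-- The two expressions for the Boros-Moll polynomial `P_m(a)` agree: the original
double sum equals the single sum obtained via Ramanujan's Master Theorem. -/
theorem boros_moll_double_sum_eq_single_sum (m : ℕ) (a : ℝ) :
    ∑ j ∈ Finset.range (m + 1), ∑ k ∈ Finset.range (m + 1),
      (((2 * m + 1).choose (2 * j) : ℝ) * ((m - j).choose k : ℝ) *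
        ((2 * k + 2 * j).choose (k + j) : ℝ)) * (a + 1) ^ j * (a - 1) ^ k / 2 ^ (3 * (k + j))
    = ((2 : ℝ) ^ (2 * m))⁻¹ * ∑ k ∈ Finset.range (m + 1),
        (2 : ℝ) ^ k * ((2 * m - 2 * k).choose (m - k) : ℝ) * ((m + k).choose k : ℝ) *
          (a + 1) ^ k := by
  have step1 : ∀ j ∈ range (m + 1),
      (∑ k ∈ Finset.range (m + 1),
        (((2 * m + 1).choose (2 * j) : ℝ) * ((m - j).choose k : ℝ) *
          ((2 * k + 2 * j).choose (k + j) : ℝ)) * (a + 1) ^ j * (a - 1) ^ k / 2 ^ (3 * (k + j)))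
      = ∑ s ∈ range (m + 1 - j),
          ((2 * m + 1).choose (2 * j) : ℝ) * ((m - j).choose s : ℝ) * phi (m - j - s) (s + j)
            * (a + 1) ^ j * (a + 1) ^ s / (8 ^ j * 8 ^ s) := by
    intro j hj
    have hjm : j ≤ m := by simpa [Nat.lt_succ_iff] using Finset.mem_range.mp hj
    have e0 : ∀ k ∈ range (m + 1),
        (((2 * m + 1).choose (2 * j) : ℝ) * ((m - j).choose k : ℝ) *
          ((2 * k + 2 * j).choose (k + j) : ℝ)) * (a + 1) ^ j * (a - 1) ^ k / 2 ^ (3 * (k + j))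
        = (((2 * m + 1).choose (2 * j) : ℝ) * (a + 1) ^ j / 8 ^ j)
            * (((m - j).choose k : ℝ) * ((k + j).centralBinom : ℝ) * ((a + 1) - 2) ^ k / 8 ^ k) := by
      intro k _
      have ecb : ((2 * k + 2 * j).choose (k + j) : ℝ) = ((k + j).centralBinom : ℝ) := by
        rw [Nat.centralBinom_eq_two_mul_choose, show 2 * (k + j) = 2 * k + 2 * j from by ring]
      have epow : (2 : ℝ) ^ (3 * (k + j)) = 8 ^ j * 8 ^ k := by
        rw [show (8 : ℝ) = 2 ^ 3 by norm_num, ← pow_mul, ← pow_mul, ← pow_add]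
        congr 1
        omega
      rw [ecb, epow, show a - 1 = (a + 1) - 2 by ring]
      have h8j : (8 : ℝ) ^ j ≠ 0 := by positivity
      have h8k : (8 : ℝ) ^ k ≠ 0 := by positivity
      field_simp
    rw [Finset.sum_congr rfl e0, ← Finset.mul_sum]
    have hshrink : ∑ k ∈ range (m + 1),
        (((m - j).choose k : ℝ) * ((k + j).centralBinom : ℝ) * ((a + 1) - 2) ^ k / 8 ^ k)
        = ∑ k ∈ range ((m - j) + 1),
            (((m - j).choose k : ℝ) * ((k + j).centralBinom : ℝ) * ((a + 1) - 2) ^ k / 8 ^ k) := by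
      symm
      refine Finset.sum_subset ?_ ?_
      · intro k hk
        simp only [Finset.mem_range] at hk ⊢
        omega
      · intro k hk hk'
        simp only [Finset.mem_range] at hk hk'
        rw [Nat.choose_eq_zero_of_lt (show m - j < k by omega)]
        simp
    rw [hshrink, bm_inner_sum (m - j) j (a + 1)]
    rw [Finset.mul_sum]
    rw [show (m - j) + 1 = m + 1 - j from by omega]
    refine Finset.sum_congr rfl fun s hs => ?_
    ring
  rw [Finset.sum_congr rfl step1]
  rw [tri_swap m (fun j s =>
    ((2 * m + 1).choose (2 * j) : ℝ) * ((m - j).choose s : ℝ) * phi (m - j - s) (s + j)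
      * (a + 1) ^ j * (a + 1) ^ s / (8 ^ j * 8 ^ s))]
  rw [Finset.mul_sum]
  refine Finset.sum_congr rfl fun l hl => ?_
  have hlm : l ≤ m := by simpa [Nat.lt_succ_iff] using Finset.mem_range.mp hl
  have hpt : ∀ j ∈ range (l + 1),
      ((2 * m + 1).choose (2 * j) : ℝ) * ((m - j).choose (l - j) : ℝ)
          * phi (m - j - (l - j)) ((l - j) + j) * (a + 1) ^ j * (a + 1) ^ (l - j)
          / (8 ^ j * 8 ^ (l - j))
      = (((2 * m + 1).choose (2 * j) * (m - j).choose (l - j) : ℕ) : ℝ)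
          * (phi (m - l) l * (a + 1) ^ l / 8 ^ l) := by
    intro j hj
    have hjl : j ≤ l := by simpa [Nat.lt_succ_iff] using Finset.mem_range.mp hj
    have ephi : phi (m - j - (l - j)) ((l - j) + j) = phi (m - l) l := by
      congr 1 <;> omega
    have h1 : (a + 1) ^ j * (a + 1) ^ (l - j) = (a + 1) ^ l := by
      rw [← pow_add]
      congr 1
      omega
    have h8 : (8 : ℝ) ^ j * 8 ^ (l - j) = 8 ^ l := by
      rw [← pow_add]
      congr 1
      omega
    rw [ephi]
    push_cast
    have h8j : (8 : ℝ) ^ j ≠ 0 := by positivity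
    have h8lj : (8 : ℝ) ^ (l - j) ≠ 0 := by positivity
    have h8l : (8 : ℝ) ^ l ≠ 0 := by positivity
    field_simp
    linear_combination (((2 * m + 1).choose (2 * j) : ℝ) * ((m - j).choose (l - j) : ℝ)
        * phi (m - l) l * 8 ^ l) * h1
      - (((2 * m + 1).choose (2 * j) : ℝ) * ((m - j).choose (l - j) : ℝ)
          * phi (m - l) l * (a + 1) ^ l) * h8
  rw [Finset.sum_congr rfl hpt, ← Finset.sum_mul, ← Nat.cast_sum, Gval m l hlm]
  rw [show ((2 * m - 2 * l).choose (m - l)) = (m - l).centralBinom from by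
    rw [Nat.centralBinom_eq_two_mul_choose]
    congr 1
    omega]
  exact final_coeff m l hlm (a + 1)
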